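/- Let d ≥ 1, t > 0, x ∈ ℝ^d, and let T_u(z) = (4πu)^{-d/2} e^{-|z|²/(4u)} be the Gaussian heat kernel. Suppose 0 ≤ T_u^V(x,y) ≤ T_u(x-y) for all y, u, and f ∈ L¹₀(ℝ^d). Then | ∫_{ℝ^d \ B(x,1)} f(y) ∫₀^∞ T_u^V(x,y) (e^{-t²/(4u)} - 1)/u du dy | ≤ C t² (1+|x|)^d ∫_{ℝ^d} |f(y)| (1+|y|)^{-d} dy for t ∈ (0,1). -/

import Mathlib

open MeasureTheory Real Set

lemma aux_cong (p c : ℝ) {u : ℝ} (hu' : (0:ℝ) < u) :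
    u ^ ((-1:ℝ) - 1) • ((u ^ (-1:ℝ)) ^ p * Real.exp (-(c * u ^ (-1:ℝ))))
      = u ^ (-(p+2)) * Real.exp (-(c * u⁻¹)) := by
  rw [smul_eq_mul, ← Real.rpow_mul hu'.le, ← mul_assoc, ← Real.rpow_add hu',
    Real.rpow_neg_one]
  have h : (-1:ℝ) - 1 + -1 * p = -(p+2) := by ring
  rw [h]

lemma aux_int (p c : ℝ) (hp : 0 ≤ p) (hc : 0 < c) :
    IntegrableOn (fun u : ℝ => u ^ (-(p+2)) * Real.exp (-(c * u⁻¹))) (Ioi 0) ∧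
    ∫ u in Ioi 0, u ^ (-(p+2)) * Real.exp (-(c * u⁻¹)) = (1/c) ^ (p+1) * Real.Gamma (p+1) := by
  set g : ℝ → ℝ := fun v => v ^ p * Real.exp (-(c * v)) with hgdef
  have hg : IntegrableOn g (Ioi 0) := by
    have := integrableOn_rpow_mul_exp_neg_mul_rpow (p := 1) (s := p) (b := c)
      (by linarith) one_pos hc
    refine this.congr_fun (fun v hv => ?_) measurableSet_Ioi
    simp [hgdef, neg_mul]
  constructor
  · have := (integrableOn_Ioi_comp_rpow_iff' g (p := -1) (by norm_num)).mpr hg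
    refine this.congr_fun (fun u hu => ?_) measurableSet_Ioi
    exact aux_cong p c hu
  · have h1 : (∫ x in Ioi (0:ℝ), (|(-1:ℝ)| * x ^ ((-1:ℝ) - 1)) • g (x ^ (-1:ℝ)))
        = ∫ y in Ioi (0:ℝ), g y := integral_comp_rpow_Ioi g (by norm_num)
    have h2 : ∫ y in Ioi (0:ℝ), g y = (1/c) ^ (p+1) * Real.Gamma (p+1) := by
      rw [← Real.integral_rpow_mul_exp_neg_mul_Ioi (by linarith : (0:ℝ) < p+1) hc]
      refine setIntegral_congr_fun measurableSet_Ioi (fun v hv => ?_)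
      simp [hgdef]
    rw [← h2, ← h1]
    refine setIntegral_congr_fun measurableSet_Ioi (fun u hu => ?_)
    rw [abs_neg, abs_one, one_mul]
    exact (aux_cong p c hu).symm

noncomputable def Kc (d : ℕ) : ℝ :=
  (4*Real.pi)^(-(d:ℝ)/2) * (4:ℝ)^((d:ℝ)/2+1) * Real.Gamma ((d:ℝ)/2+1) / 4

lemma Kc_pos (d : ℕ) : 0 < Kc d := by unfold Kc; positivity

lemma aux_inner (d : ℕ) (TV : ℝ → EuclideanSpace ℝ (Fin d) → EuclideanSpace ℝ (Fin d) → ℝ)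
    (x y : EuclideanSpace ℝ (Fin d)) (t : ℝ)
    (hTV : ∀ u, 0 < u → 0 ≤ TV u x y ∧
      TV u x y ≤ (4 * Real.pi * u) ^ (-(d:ℝ)/2) * Real.exp (-‖x - y‖^2/(4*u)))
    (hxy : 1 ≤ ‖x - y‖) :
    |∫ u in Ioi (0:ℝ), TV u x y * (Real.exp (-t^2/(4*u)) - 1) / u|
      ≤ Kc d * t^2 * ‖x - y‖ ^ (-(d:ℝ)) := by
  set p : ℝ := (d:ℝ)/2 with hpdef
  have hp : 0 ≤ p := by positivity
  set a : ℝ := ‖x - y‖^2 with hadef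
  have ha1 : 1 ≤ a := by nlinarith
  have hc : 0 < a/4 := by nlinarith
  obtain ⟨hint, hval⟩ := aux_int p (a/4) hp hc
  set g : ℝ → ℝ := fun u =>
    ((4*Real.pi)^(-p) * (t^2/4)) * (u ^ (-(p+2)) * Real.exp (-((a/4) * u⁻¹))) with hgdef
  have hgint : Integrable g (volume.restrict (Ioi 0)) := hint.const_mul _
  have hbound : ∀ᵐ u ∂(volume.restrict (Ioi (0:ℝ))),
      ‖TV u x y * (Real.exp (-t^2/(4*u)) - 1) / u‖ ≤ g u := by
    rw [ae_restrict_iff' measurableSet_Ioi]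
    refine Filter.Eventually.of_forall (fun u hu => ?_)
    replace hu : (0:ℝ) < u := hu
    obtain ⟨h0, h1⟩ := hTV u hu
    have hs0 : (0:ℝ) ≤ t^2/(4*u) := by positivity
    have hs' : -t^2/(4*u) ≤ 0 := by rw [neg_div]; linarith
    have e1 : Real.exp (-t^2/(4*u)) ≤ 1 := by
      rw [← Real.exp_zero]; exact Real.exp_le_exp.mpr hs'
    have e2 : -t^2/(4*u) + 1 ≤ Real.exp (-t^2/(4*u)) := Real.add_one_le_exp _
    have hexp : |Real.exp (-t^2/(4*u)) - 1| ≤ t^2/(4*u) := by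
      rw [abs_sub_comm, abs_of_nonneg (by linarith)]
      have : -t^2/(4*u) = -(t^2/(4*u)) := by ring
      linarith [this ▸ e2]
    have hnorm : ‖TV u x y * (Real.exp (-t^2/(4*u)) - 1) / u‖
        = TV u x y * |Real.exp (-t^2/(4*u)) - 1| / u := by
      rw [Real.norm_eq_abs, abs_div, abs_mul, abs_of_nonneg h0, abs_of_pos hu]
    rw [hnorm]
    calc TV u x y * |Real.exp (-t^2/(4*u)) - 1| / u
        ≤ ((4 * Real.pi * u) ^ (-(d:ℝ)/2) * Real.exp (-‖x - y‖^2/(4*u))) * (t^2/(4*u)) / u := by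
          gcongr
      _ = g u := by
          simp only [hgdef]
          have hmul : (4 * Real.pi * u) ^ (-(d:ℝ)/2)
              = (4*Real.pi)^(-p) * u^(-p) := by
            rw [hpdef, neg_div, Real.mul_rpow (by positivity) hu.le]
          have hup : u ^ (-(p+2)) = u ^ (-p) * (u⁻¹ * u⁻¹) := by
            rw [show -(p+2) = -p + (-1 + -1) by ring, Real.rpow_add hu, Real.rpow_add hu,
              Real.rpow_neg_one]
          have hexp2 : -‖x - y‖^2/(4*u) = -((a/4) * u⁻¹) := by
            rw [hadef]; field_simp
          rw [hmul, hup, hexp2]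
          ring
  calc |∫ u in Ioi (0:ℝ), TV u x y * (Real.exp (-t^2/(4*u)) - 1) / u|
      ≤ ∫ u in Ioi (0:ℝ), g u := by
        rw [← Real.norm_eq_abs]
        exact norm_integral_le_of_norm_le hgint hbound
    _ = ((4*Real.pi)^(-p) * (t^2/4)) * ((1/(a/4)) ^ (p+1) * Real.Gamma (p+1)) := by
        simp only [hgdef]
        rw [MeasureTheory.integral_const_mul, hval]
    _ = ((4*Real.pi)^(-p) * (4:ℝ)^(p+1) * Real.Gamma (p+1) / 4) * t^2 * a ^ (-(p+1)) := by
        have h14 : (1/(a/4) : ℝ) ^ (p+1) = (4:ℝ)^(p+1) * a ^ (-(p+1)) := by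
          rw [one_div, inv_div, Real.div_rpow (by norm_num) (by linarith),
            Real.rpow_neg (by linarith), div_eq_mul_inv]
        rw [h14]; ring
    _ ≤ ((4*Real.pi)^(-p) * (4:ℝ)^(p+1) * Real.Gamma (p+1) / 4) * t^2 * a ^ (-p) := by
        exact mul_le_mul_of_nonneg_left
          (Real.rpow_le_rpow_of_exponent_le ha1 (by linarith)) (by positivity)
    _ = Kc d * t^2 * ‖x - y‖ ^ (-(d:ℝ)) := by
        have hap : a ^ (-p) = ‖x - y‖ ^ (-(d:ℝ)) := by
          rw [hadef, ← Real.rpow_natCast (‖x - y‖) 2, ← Real.rpow_mul (norm_nonneg _)]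
          congr 1
          push_cast [hpdef]; ring
        rw [hap, Kc, hpdef, neg_div]

lemma aux_geom (d : ℕ) {r X0 Y0 : ℝ} (hr : 1 ≤ r) (hX : 0 ≤ X0) (hY : 0 ≤ Y0)
    (htri : Y0 ≤ X0 + r) :
    r ^ (-(d:ℝ)) ≤ 2^d * (1+X0)^d * (1+Y0) ^ (-(d:ℝ)) := by
  have hY2 : 1 + Y0 ≤ 2 * (1+X0) * r := by nlinarith
  have hrpos : (0:ℝ) < r := by linarith
  have hYpos : (0:ℝ) < 1 + Y0 := by linarith
  have h1 : (1+Y0) ^ (d:ℝ) ≤ (2 * (1+X0) * r) ^ (d:ℝ) :=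
    Real.rpow_le_rpow (by linarith) hY2 (by positivity)
  have h2 : (2 * (1+X0) * r) ^ (d:ℝ) = (2*(1+X0)) ^ (d:ℝ) * r ^ (d:ℝ) :=
    Real.mul_rpow (by positivity) hrpos.le
  have hM : (2*(1+X0)) ^ (d:ℝ) = 2^d * (1+X0)^d := by
    rw [Real.mul_rpow (by norm_num) (by linarith), Real.rpow_natCast, Real.rpow_natCast]
  have hrd : (0:ℝ) < r ^ (d:ℝ) := Real.rpow_pos_of_pos hrpos _
  have hYd : (0:ℝ) < (1+Y0) ^ (d:ℝ) := Real.rpow_pos_of_pos hYpos _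
  rw [Real.rpow_neg hrpos.le, Real.rpow_neg hYpos.le, inv_eq_one_div, inv_eq_one_div,
    mul_one_div, div_le_div_iff₀ hrd hYd, one_mul]
  calc (1+Y0) ^ (d:ℝ) ≤ (2*(1+X0)) ^ (d:ℝ) * r ^ (d:ℝ) := by rw [← h2]; exact h1
    _ = 2^d * (1+X0)^d * r ^ (d:ℝ) := by rw [hM]

theorem stmt15 (d : ℕ) (hd : 1 ≤ d) :
    ∃ C > 0, ∀ (TV : ℝ → EuclideanSpace ℝ (Fin d) → EuclideanSpace ℝ (Fin d) → ℝ)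
      (f : EuclideanSpace ℝ (Fin d) → ℝ) (x : EuclideanSpace ℝ (Fin d)) (t : ℝ),
      (∀ u y, 0 < u → 0 ≤ TV u x y ∧
        TV u x y ≤ (4 * Real.pi * u) ^ (-(d:ℝ)/2) * Real.exp (-‖x - y‖^2/(4*u))) →
      Integrable (fun y => |f y| * (1 + ‖y‖) ^ (-(d:ℝ))) →
      t ∈ Ioo (0:ℝ) 1 →
      |∫ y in (Metric.ball x 1)ᶜ,
          f y * ∫ u in Ioi (0:ℝ), TV u x y * (Real.exp (-t^2/(4*u)) - 1) / u|
        ≤ C * t^2 * (1 + ‖x‖)^d * ∫ y, |f y| * (1 + ‖y‖) ^ (-(d:ℝ)) := by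
  refine ⟨Kc d * 2^d, mul_pos (Kc_pos d) (by positivity), ?_⟩
  intro TV f x t hTV hf ht
  set c : ℝ := (Kc d * 2^d) * t^2 * (1 + ‖x‖)^d with hcdef
  have hc0 : 0 ≤ c := by
    have := (Kc_pos d).le
    positivity
  set G : EuclideanSpace ℝ (Fin d) → ℝ :=
    fun y => c * (|f y| * (1 + ‖y‖) ^ (-(d:ℝ))) with hGdef
  have hGint : Integrable G := hf.const_mul c
  have hGres : Integrable G (volume.restrict (Metric.ball x 1)ᶜ) := hGint.restrict
  have hbound : ∀ᵐ y ∂(volume.restrict (Metric.ball x 1)ᶜ),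
      ‖f y * ∫ u in Ioi (0:ℝ), TV u x y * (Real.exp (-t^2/(4*u)) - 1) / u‖ ≤ G y := by
    rw [ae_restrict_iff' measurableSet_ball.compl]
    refine Filter.Eventually.of_forall (fun y hy => ?_)
    have hxy : 1 ≤ ‖x - y‖ := by
      have : ¬ dist y x < 1 := hy
      have h1 : 1 ≤ dist y x := not_lt.mp this
      rwa [dist_eq_norm, ← norm_neg, neg_sub] at h1
    have hinner := aux_inner d TV x y t (fun u hu => hTV u y hu) hxy
    have htri : ‖y‖ ≤ ‖x‖ + ‖x - y‖ := by
      have := norm_sub_le x (x - y)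
      simpa using this
    have hgeom := aux_geom d hxy (norm_nonneg x) (norm_nonneg y) htri
    rw [Real.norm_eq_abs, abs_mul]
    calc |f y| * |∫ u in Ioi (0:ℝ), TV u x y * (Real.exp (-t^2/(4*u)) - 1) / u|
        ≤ |f y| * (Kc d * t^2 * ‖x - y‖ ^ (-(d:ℝ))) :=
          mul_le_mul_of_nonneg_left hinner (abs_nonneg _)
      _ ≤ |f y| * (Kc d * t^2 * (2^d * (1 + ‖x‖)^d * (1 + ‖y‖) ^ (-(d:ℝ)))) := by
          have h2 : Kc d * t^2 * ‖x - y‖ ^ (-(d:ℝ))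
              ≤ Kc d * t^2 * (2^d * (1 + ‖x‖)^d * (1 + ‖y‖) ^ (-(d:ℝ))) :=
            mul_le_mul_of_nonneg_left hgeom (mul_nonneg (Kc_pos d).le (sq_nonneg t))
          exact mul_le_mul_of_nonneg_left h2 (abs_nonneg _)
      _ = G y := by simp only [hGdef, hcdef]; ring
  calc |∫ y in (Metric.ball x 1)ᶜ,
          f y * ∫ u in Ioi (0:ℝ), TV u x y * (Real.exp (-t^2/(4*u)) - 1) / u|
      ≤ ∫ y in (Metric.ball x 1)ᶜ, G y := by
        rw [← Real.norm_eq_abs]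
        exact norm_integral_le_of_norm_le hGres hbound
    _ ≤ ∫ y, G y := setIntegral_le_integral hGint
        (Filter.Eventually.of_forall (fun y => by positivity))
    _ = c * ∫ y, |f y| * (1 + ‖y‖) ^ (-(d:ℝ)) := by
        simp only [hGdef]; rw [MeasureTheory.integral_const_mul]
    _ = (Kc d * 2^d) * t^2 * (1 + ‖x‖)^d * ∫ y, |f y| * (1 + ‖y‖) ^ (-(d:ℝ)) := by
        rw [hcdef]
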